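/- In the toroidal (n+1)×(n+1) grid digraph with monotone diagonals, any closed directed walk W with at most 2n horizontal arcs and exactly n vertical arcs admits a directed cycle Γ consisting only of diagonal arcs such that W crosses Γ at most once. -/

import Mathlib

/-- Directions of arcs in the grid digraph with monotone diagonals. -/
inductive GridDir | H | V | D
deriving DecidableEq

/-- The displacement of an arc of the toroidal grid digraph on `(ℤ/n) × (ℤ/n)`. -/
def dirVec (n : ℕ) : GridDir → ZMod n × ZMod n
  | .H => (1, 0)
  | .V => (0, 1)
  | .D => (1, 1)

/-- The side, relative to the diagonal line through a vertex (in the natural toroidal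
embedding), of the ray along which a walk *leaves* the vertex: an outgoing horizontal arc
leaves strictly below the diagonal (`-1`), an outgoing vertical arc strictly above (`1`),
and an outgoing diagonal arc along it (`0`). -/
def outSide : GridDir → ℤ
  | .H => -1
  | .V => 1
  | .D => 0

/-- The side of the ray along which a walk *arrives* at a vertex (the reversed ray). -/
def inSide (d : GridDir) : ℤ := - outSide d

/-- The vertex set of the diagonal cycle `Γ_c = {(i, i + c)}` of the toroidal grid digraph. -/
def OnDiagCycle (n : ℕ) (c : ZMod n) (p : ZMod n × ZMod n) : Prop := p.2 = p.1 + c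

/-- A crossing pair is exactly a consecutive `HH` or `VV` pair. -/
lemma side_mul_eq_neg_one (d d' : GridDir) :
    inSide d * outSide d' = -1 ↔ (d = GridDir.H ∧ d' = GridDir.H) ∨
      (d = GridDir.V ∧ d' = GridDir.V) := by
  cases d <;> cases d' <;> decide

set_option maxHeartbeats 1000000 in
/-- A closed directed walk of the toroidal `(n+1) × (n+1)` grid digraph
(vertices `(ℤ/n) × (ℤ/n)` after identification) with at most `2n` horizontal arcs and exactly
`n` vertical arcs admits a diagonal cycle `Γ` crossed at most once: at most one pair of
consecutive arcs of the walk meets a vertex of `Γ` with its two rays strictly on opposite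
sides of `Γ`. The walk is given by the tails `tail t` and directions `dir t` of its arcs,
indexed cyclically by `Fin (m+1)`. -/
theorem diagonal_cycle_crossed_at_most_once (n m : ℕ) (hn : 0 < n)
    (tail : Fin (m + 1) → ZMod n × ZMod n) (dir : Fin (m + 1) → GridDir)
    (hclosed : ∀ t : Fin (m + 1), tail (t + 1) = tail t + dirVec n (dir t))
    (hH : (Finset.univ.filter fun t => dir t = GridDir.H).card ≤ 2 * n)
    (hV : (Finset.univ.filter fun t => dir t = GridDir.V).card = n) :
    ∃ c : ZMod n,
      {t : Fin (m + 1) | OnDiagCycle n c (tail (t + 1)) ∧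
        inSide (dir t) * outSide (dir (t + 1)) = -1}.ncard ≤ 1 := by
  open Fin.CommRing in
  classical
  haveI : NeZero n := ⟨hn.ne'⟩
  have hn' : (0 : ℤ) < n := by exact_mod_cast hn
  -- the level of a vertex
  set F : Fin (m + 1) → ZMod n := fun t => (tail t).2 - (tail t).1 with hFdef
  have hstepH : ∀ t, dir t = GridDir.H → F (t + 1) = F t - 1 := by
    intro t h
    simp only [hFdef, hclosed t, h, dirVec, Prod.snd_add, Prod.fst_add]
    ring
  have hstepV : ∀ t, dir t = GridDir.V → F (t + 1) = F t + 1 := by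
    intro t h
    simp only [hFdef, hclosed t, h, dirVec, Prod.snd_add, Prod.fst_add]
    ring
  have hstepD : ∀ t, dir t = GridDir.D → F (t + 1) = F t := by
    intro t h
    simp only [hFdef, hclosed t, h, dirVec, Prod.snd_add, Prod.fst_add]
    ring
  -- arcs of each type entering a given level
  set Vh : ZMod n → Finset (Fin (m + 1)) :=
    fun c => Finset.univ.filter fun t => dir t = GridDir.V ∧ F (t + 1) = c with hVhdef
  set Hh : ZMod n → Finset (Fin (m + 1)) :=
    fun c => Finset.univ.filter fun t => dir t = GridDir.H ∧ F (t + 1) = c with hHhdef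
  set Dh : ZMod n → Finset (Fin (m + 1)) :=
    fun c => Finset.univ.filter fun t => dir t = GridDir.D ∧ F (t + 1) = c with hDhdef
  have hdisjVH : ∀ c c', Disjoint (Vh c) (Hh c') := by
    intro c c'
    rw [Finset.disjoint_left]
    intro t ht ht'
    simp only [hVhdef, hHhdef, Finset.mem_filter, Finset.mem_univ, true_and] at ht ht'
    exact absurd (ht.1.symm.trans ht'.1) (by decide)
  -- conservation of flow at each level
  have hAsplit : ∀ c : ZMod n,
      (Finset.univ.filter fun t => F (t + 1) = c).card
        = (Vh c).card + (Hh c).card + (Dh c).card := by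
    intro c
    have hU : (Finset.univ.filter fun t => F (t + 1) = c) = (Vh c ∪ Hh c) ∪ Dh c := by
      ext t
      simp only [hVhdef, hHhdef, hDhdef, Finset.mem_union, Finset.mem_filter,
        Finset.mem_univ, true_and]
      cases h : dir t <;> simp [h]
    have d1 : Disjoint (Vh c ∪ Hh c) (Dh c) := by
      rw [Finset.disjoint_left]
      intro t ht htD
      simp only [hVhdef, hHhdef, hDhdef, Finset.mem_union, Finset.mem_filter,
        Finset.mem_univ, true_and] at ht htD
      rcases ht with h | h <;> exact absurd (h.1.symm.trans htD.1) (by decide)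
    rw [hU, Finset.card_union_of_disjoint d1, Finset.card_union_of_disjoint (hdisjVH c c)]
  have hBsplit : ∀ c : ZMod n,
      (Finset.univ.filter fun t => F t = c).card
        = (Vh (c + 1)).card + (Hh (c - 1)).card + (Dh c).card := by
    intro c
    have hU : (Finset.univ.filter fun t => F t = c) = (Vh (c + 1) ∪ Hh (c - 1)) ∪ Dh c := by
      ext t
      simp only [hVhdef, hHhdef, hDhdef, Finset.mem_union, Finset.mem_filter,
        Finset.mem_univ, true_and]
      cases h : dir t with
      | H => rw [hstepH t h]; simp [h, sub_left_inj]
      | V => rw [hstepV t h]; simp [h, add_left_inj]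
      | D => rw [hstepD t h]; simp [h]
    have d1 : Disjoint (Vh (c + 1) ∪ Hh (c - 1)) (Dh c) := by
      rw [Finset.disjoint_left]
      intro t ht htD
      simp only [hVhdef, hHhdef, hDhdef, Finset.mem_union, Finset.mem_filter,
        Finset.mem_univ, true_and] at ht htD
      rcases ht with h | h <;> exact absurd (h.1.symm.trans htD.1) (by decide)
    rw [hU, Finset.card_union_of_disjoint d1,
      Finset.card_union_of_disjoint (hdisjVH (c + 1) (c - 1))]
  have hAB : ∀ c : ZMod n,
      (Finset.univ.filter fun t => F (t + 1) = c).card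
        = (Finset.univ.filter fun t => F t = c).card := by
    intro c
    apply Finset.card_bij (fun t _ => t + 1)
    · intro a ha
      simp only [Finset.mem_filter, Finset.mem_univ, true_and] at ha ⊢
      exact ha
    · intro a _ b _ hab
      exact add_right_cancel hab
    · intro b hb
      simp only [Finset.mem_filter, Finset.mem_univ, true_and] at hb ⊢
      have hb1 : b - 1 + 1 = b := by ring
      exact ⟨b - 1, by rwa [hb1], hb1⟩
  have hgstep : ∀ c : ZMod n,
      ((Vh (c + 1)).card : ℤ) - ((Hh c).card : ℤ)
        = ((Vh c).card : ℤ) - ((Hh (c - 1)).card : ℤ) := by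
    intro c
    have h1 := hAsplit c
    have h2 := hBsplit c
    have h3 := hAB c
    omega
  set K : ℤ := ((Vh 0).card : ℤ) - ((Hh (0 - 1)).card : ℤ) with hKdef
  have hgconst : ∀ c : ZMod n, ((Vh c).card : ℤ) - ((Hh (c - 1)).card : ℤ) = K := by
    have key : ∀ j : ℕ, ((Vh (j : ZMod n)).card : ℤ) - ((Hh ((j : ZMod n) - 1)).card : ℤ) = K := by
      intro j
      induction j with
      | zero => simp [hKdef]
      | succ i ih =>
        have hc : ((i + 1 : ℕ) : ZMod n) = (i : ZMod n) + 1 := by push_cast; ring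
        rw [hc, add_sub_cancel_right, hgstep (i : ZMod n)]
        exact ih
    intro c
    obtain ⟨j, rfl⟩ := ZMod.natCast_zmod_surjective (n := n) c
    exact key j
  -- total counts
  set Hcard := (Finset.univ.filter fun t => dir t = GridDir.H).card with hHcarddef
  have hVsum : ∑ c : ZMod n, (Vh c).card = n := by
    have h := Finset.card_eq_sum_card_fiberwise
      (s := Finset.univ.filter fun t => dir t = GridDir.V)
      (t := (Finset.univ : Finset (ZMod n))) (f := fun t => F (t + 1))
      (fun x _ => Finset.mem_univ _)
    rw [hV] at h
    have h2 : ∑ c : ZMod n, (Vh c).card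
        = ∑ b : ZMod n, ((Finset.univ.filter fun t => dir t = GridDir.V).filter
            fun a => F (a + 1) = b).card := by
      apply Finset.sum_congr rfl
      intro c _
      simp only [hVhdef, Finset.filter_filter]
    rw [h2]
    exact h.symm
  have hHsum : ∑ c : ZMod n, (Hh c).card = Hcard := by
    have h := Finset.card_eq_sum_card_fiberwise
      (s := Finset.univ.filter fun t => dir t = GridDir.H)
      (t := (Finset.univ : Finset (ZMod n))) (f := fun t => F (t + 1))
      (fun x _ => Finset.mem_univ _)
    have h2 : ∑ c : ZMod n, (Hh c).card
        = ∑ b : ZMod n, ((Finset.univ.filter fun t => dir t = GridDir.H).filter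
            fun a => F (a + 1) = b).card := by
      apply Finset.sum_congr rfl
      intro c _
      simp only [hHhdef, Finset.filter_filter]
    rw [h2, hHcarddef]
    exact h.symm
  have hKsum : (n : ℤ) - (Hcard : ℤ) = n * K := by
    have h1 : ∑ c : ZMod n, (((Vh c).card : ℤ) - ((Hh (c - 1)).card : ℤ)) = (n : ℤ) * K := by
      rw [Finset.sum_congr rfl fun c _ => hgconst c, Finset.sum_const, Finset.card_univ,
        ZMod.card, nsmul_eq_mul]
    have h2 : ∑ c : ZMod n, ((Hh (c - 1)).card : ℤ) = (Hcard : ℤ) := by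
      have e := Equiv.sum_comp (Equiv.subRight (1 : ZMod n)) (fun c => ((Hh c).card : ℤ))
      simp only [Equiv.subRight_apply] at e
      rw [e]
      exact_mod_cast hHsum
    have h3 : ∑ c : ZMod n, ((Vh c).card : ℤ) = (n : ℤ) := by exact_mod_cast hVsum
    rw [Finset.sum_sub_distrib, h2, h3] at h1
    exact h1
  have hKle : K ≤ 1 := by
    have h : (n : ℤ) * K ≤ n * 1 := by
      rw [← hKsum, mul_one]
      have : (0 : ℤ) ≤ (Hcard : ℤ) := Int.natCast_nonneg _
      linarith
    exact le_of_mul_le_mul_left h hn'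
  have hKge : -1 ≤ K := by
    have h : (n : ℤ) * (-1) ≤ n * K := by
      rw [← hKsum]
      have : (Hcard : ℤ) ≤ 2 * n := by exact_mod_cast hH
      linarith
    exact le_of_mul_le_mul_left h hn'
  -- crossing pairs
  set XV : ZMod n → Finset (Fin (m + 1)) :=
    fun c => Finset.univ.filter fun t =>
      (dir t = GridDir.V ∧ dir (t + 1) = GridDir.V) ∧ F (t + 1) = c with hXVdef
  set XH : ZMod n → Finset (Fin (m + 1)) :=
    fun c => Finset.univ.filter fun t =>
      (dir t = GridDir.H ∧ dir (t + 1) = GridDir.H) ∧ F (t + 1) = c with hXHdef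
  have hNcard : ∀ c : ZMod n,
      {t : Fin (m + 1) | OnDiagCycle n c (tail (t + 1)) ∧
        inSide (dir t) * outSide (dir (t + 1)) = -1}.ncard = (XH c).card + (XV c).card := by
    intro c
    have hdisj : Disjoint (XH c) (XV c) := by
      rw [Finset.disjoint_left]
      intro t ht ht'
      simp only [hXHdef, hXVdef, Finset.mem_filter, Finset.mem_univ, true_and] at ht ht'
      exact absurd (ht.1.1.symm.trans ht'.1.1) (by decide)
    have hseteq : {t : Fin (m + 1) | OnDiagCycle n c (tail (t + 1)) ∧
        inSide (dir t) * outSide (dir (t + 1)) = -1} = ↑(XH c ∪ XV c) := by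
      ext t
      simp only [Set.mem_setOf_eq, Finset.coe_union, Set.mem_union, Finset.mem_coe,
        hXHdef, hXVdef, Finset.mem_filter, Finset.mem_univ, true_and,
        side_mul_eq_neg_one]
      have hdiag : OnDiagCycle n c (tail (t + 1)) ↔ F (t + 1) = c := by
        simp only [OnDiagCycle, hFdef]
        constructor
        · intro h; rw [h]; ring
        · intro h; rw [← h]; ring
      rw [hdiag]
      tauto
    rw [hseteq, Set.ncard_coe_finset, Finset.card_union_of_disjoint hdisj]
  by_contra hcon
  push_neg at hcon
  have hcross : ∀ c : ZMod n, 2 ≤ (XH c).card + (XV c).card := by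
    intro c
    have h := hcon c
    rw [hNcard c] at h
    omega
  have hXVle : ∀ c, (XV c).card ≤ (Vh c).card := by
    intro c
    apply Finset.card_le_card
    intro t ht
    simp only [hXVdef, hVhdef, Finset.mem_filter, Finset.mem_univ, true_and] at ht ⊢
    exact ⟨ht.1.1, ht.2⟩
  have hXHle : ∀ c, (XH c).card ≤ (Hh (c - 1)).card := by
    intro c
    apply Finset.card_le_card_of_injOn (fun t => t + 1)
    · intro t ht
      simp only [hXHdef, hHhdef, Finset.mem_filter, Finset.mem_univ, true_and,
        Finset.mem_coe] at ht ⊢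
      refine ⟨ht.1.2, ?_⟩
      rw [hstepH _ ht.1.2, ht.2]
    · intro a _ b _ hab
      exact add_right_cancel hab
  by_cases hA : ∃ c, (Vh c).card = 0
  · -- some level has no entering vertical arc
    obtain ⟨c, hc0⟩ := hA
    have h1 := hgconst c
    rw [hc0] at h1
    push_cast at h1
    have h2 := hcross c
    have h3 := hXHle c
    have h4 := hXVle c
    omega
  · push_neg at hA
    have hv1 : ∀ c, (Vh c).card = 1 := by
      have hle : ∀ c ∈ (Finset.univ : Finset (ZMod n)), 1 ≤ (Vh c).card := by
        intro c _
        exact Nat.one_le_iff_ne_zero.mpr (hA c)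
      have hsum : ∑ _c : ZMod n, (1 : ℕ) = ∑ c : ZMod n, (Vh c).card := by
        rw [hVsum, Finset.sum_const, smul_eq_mul, mul_one, Finset.card_univ, ZMod.card]
      intro c
      exact ((Finset.sum_eq_sum_iff_of_le hle).mp hsum c (Finset.mem_univ c)).symm
    have hhc : ∀ c : ZMod n, ((Hh c).card : ℤ) = 1 - K := by
      intro c
      have h1 := hgconst (c + 1)
      rw [add_sub_cancel_right, hv1 (c + 1)] at h1
      push_cast at h1
      linarith
    by_cases hK1 : K = 1
    · -- no horizontal arcs at all
      have hH0 : ((Hh (0 - 1)).card : ℤ) = 0 := by rw [hhc (0 - 1), hK1]; ring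
      have e1 := hcross 0
      have e2 := hXHle 0
      have e3 := hXVle 0
      have e4 := hv1 0
      omega
    · have hKle0 : K ≤ 0 := by
        rcases lt_or_eq_of_le hKle with h | h
        · omega
        · exact absurd h hK1
      have hh2 : ∀ c, (Hh c).card ≤ 2 := by
        intro c
        have := hhc c
        omega
      -- Key property: a vertical arc can only be followed (through diagonal pauses)
      -- by another vertical arc.
      have KP : ∀ (s : Fin (m + 1)) (k : ℕ), dir s = GridDir.V →
          (∀ i : ℕ, 1 ≤ i → i ≤ k → dir (s + (i : Fin (m + 1))) = GridDir.D) →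
          dir (s + ((k + 1 : ℕ) : Fin (m + 1))) ≠ GridDir.H := by
        intro s k hsV hDs hEnd
        have hFlevel : ∀ i : ℕ, 1 ≤ i → i ≤ k + 1 →
            F (s + (i : Fin (m + 1))) = F (s + 1) := by
          intro i h1 h2
          induction i with
          | zero => omega
          | succ i ih =>
            rcases Nat.eq_zero_or_pos i with h0 | hpos
            · subst h0; norm_num
            · have hcast : ((i + 1 : ℕ) : Fin (m + 1)) = ((i : ℕ) : Fin (m + 1)) + 1 := by
                push_cast; ring
              rw [hcast, ← add_assoc, hstepD _ (hDs i hpos (by omega))]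
              exact ih hpos (by omega)
        have hs1 : dir (s + 1) ≠ GridDir.V := by
          intro hV'
          rcases Nat.eq_zero_or_pos k with h0 | hpos
          · subst h0
            rw [show ((0 + 1 : ℕ) : Fin (m + 1)) = 1 by norm_num] at hEnd
            exact absurd (hV'.symm.trans hEnd) (by decide)
          · have hd := hDs 1 le_rfl hpos
            rw [show ((1 : ℕ) : Fin (m + 1)) = 1 by norm_num] at hd
            exact absurd (hV'.symm.trans hd) (by decide)
        have hXV0 : (XV (F (s + 1))).card = 0 := by
          rw [Finset.card_eq_zero, Finset.eq_empty_iff_forall_notMem]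
          intro t ht
          simp only [hXVdef, Finset.mem_filter, Finset.mem_univ, true_and] at ht
          have hsmem : s ∈ Vh (F (s + 1)) := by
            simp only [hVhdef, Finset.mem_filter, Finset.mem_univ, true_and]
            exact ⟨hsV, trivial⟩
          have htmem : t ∈ Vh (F (s + 1)) := by
            simp only [hVhdef, Finset.mem_filter, Finset.mem_univ, true_and]
            exact ⟨ht.1.1, ht.2⟩
          obtain ⟨a, ha⟩ := Finset.card_eq_one.mp (hv1 (F (s + 1)))
          rw [ha, Finset.mem_singleton] at hsmem htmem
          have hts : t = s := htmem.trans hsmem.symm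
          rw [hts] at ht
          exact hs1 ht.1.2
        have hXH2 : 2 ≤ (XH (F (s + 1))).card := by
          have := hcross (F (s + 1))
          omega
        have himg : (XH (F (s + 1))).image (fun t => t + 1) = Hh (F (s + 1) - 1) := by
          apply Finset.eq_of_subset_of_card_le
          · intro u hu
            simp only [Finset.mem_image] at hu
            obtain ⟨t, ht, rfl⟩ := hu
            simp only [hXHdef, Finset.mem_filter, Finset.mem_univ, true_and] at ht
            simp only [hHhdef, Finset.mem_filter, Finset.mem_univ, true_and]
            exact ⟨ht.1.2, by rw [hstepH _ ht.1.2, ht.2]⟩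
          · rw [Finset.card_image_of_injective _ (add_left_injective (1 : Fin (m + 1)))]
            exact le_trans (hh2 (F (s + 1) - 1)) hXH2
        have humem : s + ((k + 1 : ℕ) : Fin (m + 1)) ∈ Hh (F (s + 1) - 1) := by
          simp only [hHhdef, Finset.mem_filter, Finset.mem_univ, true_and]
          refine ⟨hEnd, ?_⟩
          rw [hstepH _ hEnd, hFlevel (k + 1) (by omega) le_rfl]
        rw [← himg, Finset.mem_image] at humem
        obtain ⟨t, htmem, hteq⟩ := humem
        have hteq' : t = s + ((k : ℕ) : Fin (m + 1)) := by
          have hcast : ((k + 1 : ℕ) : Fin (m + 1)) = ((k : ℕ) : Fin (m + 1)) + 1 := by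
            push_cast; ring
          rw [hcast, ← add_assoc] at hteq
          exact add_right_cancel hteq
        have htH : dir t = GridDir.H := by
          simp only [hXHdef, Finset.mem_filter, Finset.mem_univ, true_and] at htmem
          exact htmem.1.1
        rw [hteq'] at htH
        rcases Nat.eq_zero_or_pos k with h0 | hpos
        · subst h0
          rw [Nat.cast_zero, add_zero] at htH
          exact absurd (hsV.symm.trans htH) (by decide)
        · have hd := hDs k hpos le_rfl
          exact absurd (hd.symm.trans htH) (by decide)
      -- propagate: after a vertical arc every arc is vertical or diagonal
      obtain ⟨s₀, hs₀⟩ : ∃ s₀ : Fin (m + 1), dir s₀ = GridDir.V := by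
        have h1 : (Vh 0).Nonempty := Finset.card_pos.mp (by rw [hv1 0]; omega)
        obtain ⟨t, ht⟩ := h1
        simp only [hVhdef, Finset.mem_filter, Finset.mem_univ, true_and] at ht
        exact ⟨t, ht.1⟩
      have main : ∀ j : ℕ, ∃ jv : ℕ, jv ≤ j ∧
          dir (s₀ + ((jv : ℕ) : Fin (m + 1))) = GridDir.V ∧
          ∀ i : ℕ, jv < i → i ≤ j → dir (s₀ + ((i : ℕ) : Fin (m + 1))) = GridDir.D := by
        intro j
        induction j with
        | zero =>
          refine ⟨0, le_rfl, ?_, ?_⟩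
          · rw [Nat.cast_zero, add_zero]; exact hs₀
          · intro i h1 h2; omega
        | succ j ih =>
          obtain ⟨jv, hjvle, hjvV, hjvD⟩ := ih
          cases hnext : dir (s₀ + ((j + 1 : ℕ) : Fin (m + 1))) with
          | V =>
            refine ⟨j + 1, le_rfl, hnext, ?_⟩
            intro i h1 h2
            omega
          | D =>
            refine ⟨jv, by omega, hjvV, ?_⟩
            intro i h1 h2
            rcases Nat.lt_or_ge i (j + 1) with h | h
            · exact hjvD i h1 (by omega)
            · have hi : i = j + 1 := by omega
              rw [hi]
              exact hnext
          | H =>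
            exfalso
            refine KP (s₀ + ((jv : ℕ) : Fin (m + 1))) (j - jv) hjvV ?_ ?_
            · intro i h1 h2
              have hcast : s₀ + ((jv : ℕ) : Fin (m + 1)) + ((i : ℕ) : Fin (m + 1))
                  = s₀ + (((jv + i : ℕ)) : Fin (m + 1)) := by push_cast; ring
              rw [hcast]
              exact hjvD (jv + i) (by omega) (by omega)
            · have hcast : s₀ + ((jv : ℕ) : Fin (m + 1)) + (((j - jv + 1 : ℕ)) : Fin (m + 1))
                  = s₀ + (((j + 1 : ℕ)) : Fin (m + 1)) := by
                rw [add_assoc, ← Nat.cast_add]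
                congr 2
                omega
              rw [hcast]
              exact hnext
      -- but there is a horizontal arc
      have hHpos : 0 < Hcard := by
        have hnk : (n : ℤ) * K ≤ 0 := mul_nonpos_of_nonneg_of_nonpos hn'.le hKle0
        omega
      obtain ⟨u, hu⟩ : ∃ u : Fin (m + 1), dir u = GridDir.H := by
        have h1 : (Finset.univ.filter fun t => dir t = GridDir.H).Nonempty :=
          Finset.card_pos.mp (by omega)
        obtain ⟨t, ht⟩ := h1
        simp only [Finset.mem_filter, Finset.mem_univ, true_and] at ht
        exact ⟨t, ht⟩
      obtain ⟨jv, hle', hV', hD'⟩ := main (u - s₀).val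
      have hu' : s₀ + (((u - s₀).val : ℕ) : Fin (m + 1)) = u := by
        rw [Fin.cast_val_eq_self]
        ring
      rcases Nat.lt_or_ge jv (u - s₀).val with h | h
      · have hd := hD' (u - s₀).val h le_rfl
        rw [hu', hu] at hd
        exact absurd hd (by decide)
      · have hj : jv = (u - s₀).val := le_antisymm hle' h
        rw [hj, hu', hu] at hV'
        exact absurd hV' (by decide)
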